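/- Pareto characterization for arborescences: given a complete directed graph on [n] with strict rankings r_i of the outgoing edges of each node i, an arborescence τ (a spanning tree with all edges directed towards a root of out-degree 0, one chosen out-edge τ_i per non-root node) can be produced by a serial dictatorship — agents act in some order, each drawing her highest-ranked outgoing edge that does not create a directed cycle with edges drawn so far — if and only if τ is Pareto-optimal: no arborescence τ' satisfies r_i(τ'_i) ≤ r_i(τ_i) for all i with strict inequality for some i. -/

import Mathlib

/-- The agents that precede `i` in the action (sub)sequence `π`. -/
def prefixBefore {n : ℕ} (π : List (Fin n)) (i : Fin n) : List (Fin n) :=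
  π.takeWhile (fun j => j != i)

/-- A full action sequence: an ordering of all `n` agents. -/
def IsSeq {n : ℕ} (π : List (Fin n)) : Prop :=
  π.Nodup ∧ ∀ i : Fin n, i ∈ π

/-- `t` is an arborescence with root `root`: the root has no out-edge (encoded by
`t root = root`), every other node has a proper out-edge, and every node reaches the
root by iterating `t`. -/
def IsArb {n : ℕ} (t : Fin n → Fin n) (root : Fin n) : Prop :=
  t root = root ∧ (∀ i, i ≠ root → t i ≠ i) ∧ ∀ i, ∃ k, t^[k] i = root

/-- The edge relation of the edges drawn by agents in list `P` (under out-map `t`). -/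
def drel {n : ℕ} (t : Fin n → Fin n) (P : List (Fin n)) : Fin n → Fin n → Prop :=
  fun a b => a ∈ P ∧ t a = b ∧ a ≠ b

/-- The serial dictatorship with ordering `π` produces the out-edges `t`: each agent
draws her top-ranked outgoing edge among those not closing a directed cycle with the
edges drawn by her predecessors (an edge `(i,j)` is forbidden iff `i` is reachable
from `j`); she draws nothing (`t i = i`) only if all edges are forbidden, which is
expressed via the rank of the self-loop being worst. -/
def ProducedA {n : ℕ} (r : Fin n → Fin n → ℕ) (t : Fin n → Fin n)
    (π : List (Fin n)) : Prop :=
  ∀ i : Fin n,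
    (t i ≠ i → ¬ Relation.ReflTransGen (drel t (prefixBefore π i)) (t i) i) ∧
    ∀ j, ¬ Relation.ReflTransGen (drel t (prefixBefore π i)) j i → r i (t i) ≤ r i j

section Aux

variable {n : ℕ}

/-- From a reflexive-transitive chain of drawn edges we can extract an iterate of any
map `t'` agreeing with `t` on `P`. -/
lemma rtg_to_iterate {t t' : Fin n → Fin n} {P : List (Fin n)} {x y : Fin n}
    (h : Relation.ReflTransGen (drel t P) x y) (hP : ∀ a ∈ P, t' a = t a) :
    ∃ m, t'^[m] x = y := by
  induction h with
  | refl => exact ⟨0, rfl⟩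
  | tail _ hbc ih =>
    obtain ⟨m, hm⟩ := ih
    obtain ⟨hbP, hb, _⟩ := hbc
    exact ⟨m + 1, by rw [Function.iterate_succ_apply', hm, hP _ hbP, hb]⟩

/-- In an arborescence there is no nontrivial cycle. -/
lemma no_cycle {t' : Fin n → Fin n} {root' i : Fin n} (ht' : IsArb t' root')
    {p : ℕ} (hp : t'^[p] i = i) (hp1 : 1 ≤ p) (hi : t' i ≠ i) : False := by
  obtain ⟨K, hK⟩ := ht'.2.2 i
  have hroot : i ≠ root' := by
    intro h; subst h; exact hi ht'.1
  obtain ⟨q, rfl⟩ : ∃ q, p = q + 1 := ⟨p - 1, by omega⟩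
  have h2 : t'^[(q + 1) * K] i = i := by
    rw [Function.iterate_mul]; exact Function.iterate_fixed hp K
  have h3 : t'^[(q + 1) * K] i = root' := by
    have he : (q + 1) * K = q * K + K := by ring
    rw [he, Function.iterate_add_apply, hK, Function.iterate_fixed ht'.1]
  exact hroot (h2.symm.trans h3)

/-- Existence of a first agent in a list where `t'` and `t` differ. -/
lemma first_differ {t t' : Fin n → Fin n} :
    ∀ (π : List (Fin n)), (∃ i ∈ π, t' i ≠ t i) →
      ∃ i, i ∈ π ∧ t' i ≠ t i ∧ ∀ a ∈ prefixBefore π i, t' a = t a := by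
  intro π
  induction π with
  | nil => rintro ⟨i, hi, -⟩; exact absurd hi List.not_mem_nil
  | cons b l ih =>
    rintro ⟨i, hi, hne⟩
    by_cases hb : t' b = t b
    · have hil : i ∈ l := by
        rcases List.mem_cons.mp hi with h | h
        · exact absurd (h ▸ hb) hne
        · exact h
      obtain ⟨j, hjl, hjne, hjpre⟩ := ih ⟨i, hil, hne⟩
      refine ⟨j, List.mem_cons_of_mem _ hjl, hjne, ?_⟩
      have hbj : b ≠ j := fun h => hjne (h ▸ hb)
      have hpre : prefixBefore (b :: l) j = b :: prefixBefore l j := by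
        simp [prefixBefore, List.takeWhile_cons, hbj]
      rw [hpre]
      intro a ha
      rcases List.mem_cons.mp ha with h | h
      · exact h ▸ hb
      · exact hjpre a h
    · refine ⟨b, List.mem_cons_self, hb, ?_⟩
      have hpre : prefixBefore (b :: l) b = [] := by
        simp [prefixBefore, List.takeWhile_cons]
      rw [hpre]; intro a ha; exact absurd ha List.not_mem_nil

lemma takeWhile_append_eq {i : Fin n} :
    ∀ (A B : List (Fin n)), i ∉ A →
      List.takeWhile (fun j => j != i) (A ++ i :: B) = A := by
  intro A
  induction A with
  | nil => intro B _; simp [List.takeWhile_cons]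
  | cons a A ihA =>
    intro B h
    have hai : a ≠ i := fun hh => h (hh ▸ List.mem_cons_self (a := a) (l := A))
    have h2 : i ∉ A := fun hh => h (List.mem_cons_of_mem _ hh)
    simp only [List.cons_append, List.takeWhile_cons]
    simp [hai, ihA B h2]

/-- Build a chain of drawn edges from iterates of `t`. -/
lemma iterate_to_rtg {t : Fin n → Fin n} {root : Fin n} (ht : IsArb t root)
    {P : List (Fin n)} {i : Fin n} :
    ∀ (k : ℕ) (x : Fin n), t^[k] x = i →
      (∀ l, l < k → t^[l] x ∈ P ∧ t^[l] x ≠ root) →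
      Relation.ReflTransGen (drel t P) x i := by
  intro k
  induction k with
  | zero => intro x hx _; exact hx ▸ Relation.ReflTransGen.refl
  | succ m ih =>
    intro x hx hcond
    have h0 := hcond 0 (Nat.succ_pos m)
    simp only [Function.iterate_zero, id] at h0
    refine Relation.ReflTransGen.head ⟨h0.1, rfl, (ht.2.1 x h0.2).symm⟩ ?_
    refine ih (t x) ?_ ?_
    · rw [← Function.iterate_succ_apply]; exact hx
    · intro l hl
      have hc := hcond (l + 1) (by omega)
      rwa [Function.iterate_succ_apply] at hc

/-- Pareto optimality implies: any edge strictly preferred by `i` to `t i` points to a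
strict `t`-descendant of `i`. -/
lemma pareto_to_descend {r : Fin n → Fin n → ℕ}
    (hworst : ∀ i j : Fin n, j ≠ i → r i j < r i i)
    {t : Fin n → Fin n} {root : Fin n} (ht : IsArb t root)
    (hpar : ¬ ∃ (t' : Fin n → Fin n) (root' : Fin n), IsArb t' root' ∧
        (∀ i, r i (t' i) ≤ r i (t i)) ∧ ∃ i, r i (t' i) < r i (t i)) :
    ∀ i j, r i j < r i (t i) → ∃ k, 1 ≤ k ∧ t^[k] j = i := by
  intro i j hij
  by_cases hiroot : i = root
  · have hj : j ≠ i := by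
      intro h
      rw [h, hiroot, ht.1] at hij
      exact lt_irrefl _ hij
    obtain ⟨k, hk0⟩ := ht.2.2 j
    have hk : t^[k] j = i := by rw [hiroot]; exact hk0
    refine ⟨k, ?_, hk⟩
    rcases Nat.eq_zero_or_pos k with h | h
    · subst h
      simp only [Function.iterate_zero, id] at hk
      exact absurd hk hj
    · exact h
  · by_contra hnk
    push_neg at hnk
    have hti : t i ≠ i := ht.2.1 i hiroot
    have hji : j ≠ i := by
      intro h
      rw [h] at hij
      exact absurd (hij.trans (hworst i (t i) hti)) (lt_irrefl _)
    have hall : ∀ l, t^[l] j ≠ i := by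
      intro l
      cases l with
      | zero => exact hji
      | succ m => exact hnk (m + 1) (by omega)
    classical
    set t' := Function.update t i j with ht'def
    have hup_i : t' i = j := Function.update_self i j t
    have hup_ne : ∀ a, a ≠ i → t' a = t a := fun a ha => Function.update_of_ne ha j t
    have hA : ∀ l, t'^[l] j = t^[l] j := by
      intro l
      induction l with
      | zero => rfl
      | succ m ihm =>
        rw [Function.iterate_succ_apply', Function.iterate_succ_apply', ihm,
          hup_ne _ (hall m)]
    have hB : ∀ (k : ℕ) (x : Fin n), t^[k] x = root → ∃ m, t'^[m] x = root := by
      intro k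
      induction k with
      | zero => intro x hx; exact ⟨0, hx⟩
      | succ m ihm =>
        intro x hx
        by_cases hxi : x = i
        · subst hxi
          obtain ⟨K, hK⟩ := ht.2.2 j
          exact ⟨K + 1, by rw [Function.iterate_succ_apply, hup_i, hA, hK]⟩
        · obtain ⟨m', hm'⟩ := ihm (t x) (by rwa [Function.iterate_succ_apply] at hx)
          exact ⟨m' + 1, by rw [Function.iterate_succ_apply, hup_ne _ hxi, hm']⟩
    have harb : IsArb t' root := by
      refine ⟨?_, ?_, ?_⟩
      · rw [hup_ne root (Ne.symm hiroot)]; exact ht.1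
      · intro a ha
        by_cases hai : a = i
        · subst hai; rw [hup_i]; exact hji
        · rw [hup_ne a hai]; exact ht.2.1 a ha
      · intro x
        obtain ⟨k, hk⟩ := ht.2.2 x
        exact hB k x hk
    refine hpar ⟨t', root, harb, ?_, ⟨i, ?_⟩⟩
    · intro a
      by_cases hai : a = i
      · subst hai; rw [hup_i]; exact le_of_lt hij
      · rw [hup_ne a hai]
    · rw [hup_i]; exact hij

end Aux

/-- an arborescence can be produced by a serial dictatorship iff it is
Pareto-optimal among arborescences w.r.t. the strict rankings `r`. -/
theorem stmt13 {n : ℕ} (r : Fin n → Fin n → ℕ) (hr : ∀ i, Function.Injective (r i))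
    (hworst : ∀ i j : Fin n, j ≠ i → r i j < r i i)
    (t : Fin n → Fin n) (root : Fin n) (ht : IsArb t root) :
    (∃ π, IsSeq π ∧ ProducedA r t π) ↔
      ¬ ∃ (t' : Fin n → Fin n) (root' : Fin n), IsArb t' root' ∧
          (∀ i, r i (t' i) ≤ r i (t i)) ∧ ∃ i, r i (t' i) < r i (t i) := by
  constructor
  · rintro ⟨π, hseq, hprod⟩ ⟨t', root', harb', hle, i0, hlt0⟩
    have hex : ∃ i ∈ π, t' i ≠ t i := by
      refine ⟨i0, hseq.2 i0, fun h => ?_⟩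
      rw [h] at hlt0; exact lt_irrefl _ hlt0
    obtain ⟨i, hiπ, hine, hipre⟩ := first_differ π hex
    have hlt : r i (t' i) < r i (t i) :=
      lt_of_le_of_ne (hle i) fun h => hine (hr i h)
    have hreach : Relation.ReflTransGen (drel t (prefixBefore π i)) (t' i) i := by
      by_contra hc
      exact absurd ((hprod i).2 (t' i) hc) (not_le.mpr hlt)
    obtain ⟨m, hm⟩ := rtg_to_iterate hreach hipre
    have hti' : t' i ≠ i := by
      intro h
      have h1 : r i (t i) ≤ r i i := by
        by_cases hii : t i = i
        · rw [hii]
        · exact le_of_lt (hworst i (t i) hii)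
      rw [h] at hlt; omega
    have hcyc : t'^[m + 1] i = i := by
      rw [Function.iterate_succ_apply, hm]
    exact no_cycle harb' hcyc (by omega) hti'
  · intro hpar
    classical
    have hC := pareto_to_descend hworst ht hpar
    set d : Fin n → ℕ := fun x => Nat.find (ht.2.2 x) with hd
    have hdspec : ∀ x, t^[d x] x = root := fun x => Nat.find_spec (ht.2.2 x)
    have hdzero : ∀ x, d x = 0 ↔ x = root := by
      intro x
      constructor
      · intro h
        have hs := hdspec x; rwa [h] at hs
      · intro h; subst h
        exact Nat.eq_zero_of_le_zero (Nat.find_le (by simp))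
    have hdstep : ∀ y, y ≠ root → d y = d (t y) + 1 := by
      intro y hy
      have h1 : d y ≤ d (t y) + 1 :=
        Nat.find_le (by rw [Function.iterate_succ_apply]; exact hdspec (t y))
      have hpos : 1 ≤ d y := by
        rcases Nat.eq_zero_or_pos (d y) with h | h
        · exact absurd ((hdzero y).mp h) hy
        · exact h
      have h2 : d (t y) ≤ d y - 1 := by
        apply Nat.find_le
        have hs := hdspec y
        rw [show d y = (d y - 1) + 1 by omega, Function.iterate_succ_apply] at hs
        exact hs
      omega
    have hdmono : ∀ (m : ℕ) (y i' : Fin n), i' ≠ root → t^[m] y = i' →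
        d i' + m ≤ d y := by
      intro m
      induction m with
      | zero =>
        intro y i' _ h
        simp only [Function.iterate_zero, id] at h
        subst h; omega
      | succ m ihm =>
        intro y i' hi' h
        have hy : y ≠ root := by
          intro hh; subst hh
          rw [Function.iterate_fixed ht.1] at h
          exact hi' h.symm
        have hih := ihm (t y) i' hi' (by rwa [Function.iterate_succ_apply] at h)
        rw [hdstep y hy]; omega
    haveI : IsTotal (Fin n) (fun a b => d b ≤ d a) := ⟨fun a b => le_total (d b) (d a)⟩
    haveI : IsTrans (Fin n) (fun a b => d b ≤ d a) := ⟨fun a b c h1 h2 => le_trans h2 h1⟩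
    set π := List.insertionSort (fun a b => d b ≤ d a) (List.finRange n) with hπ
    have hperm : List.Perm π (List.finRange n) := List.perm_insertionSort _ _
    have hsorted : π.Pairwise (fun a b => d b ≤ d a) := List.pairwise_insertionSort _ _
    have hnodup : π.Nodup := hperm.nodup_iff.mpr (List.nodup_finRange n)
    have hmemπ : ∀ x : Fin n, x ∈ π := fun x => hperm.mem_iff.mpr (List.mem_finRange x)
    refine ⟨π, ⟨hnodup, hmemπ⟩, ?_⟩
    intro i
    obtain ⟨A, B, hAB⟩ := List.mem_iff_append.mp (hmemπ i)
    have hiA : i ∉ A := by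
      have hnd : (A ++ i :: B).Nodup := hAB ▸ hnodup
      have hdisj := (List.nodup_append'.mp hnd).2.2
      intro hh
      exact hdisj hh List.mem_cons_self
    have hpre : prefixBefore π i = A := by
      rw [prefixBefore, hAB]
      exact takeWhile_append_eq A B hiA
    have hBle : ∀ x ∈ B, d x ≤ d i := by
      have hs : (A ++ i :: B).Pairwise (fun a b => d b ≤ d a) := hAB ▸ hsorted
      have := (List.pairwise_append.mp hs).2.1
      exact (List.pairwise_cons.mp this).1
    have hbefore : ∀ x : Fin n, x ≠ i → d i < d x → x ∈ A := by
      intro x hxi hdx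
      have hx := hmemπ x
      rw [hAB] at hx
      rcases List.mem_append.mp hx with h | h
      · exact h
      · rcases List.mem_cons.mp h with h | h
        · exact absurd h hxi
        · exact absurd hdx (not_lt.mpr (hBle x h))
    have hreach : ∀ j : Fin n, j ≠ i → (∃ k, t^[k] j = i) →
        Relation.ReflTransGen (drel t (prefixBefore π i)) j i := by
      intro j hji hex
      have hk : t^[Nat.find hex] j = i := Nat.find_spec hex
      refine iterate_to_rtg ht (Nat.find hex) j hk ?_
      intro l hl
      have hxl_ne : t^[l] j ≠ i := Nat.find_min hex hl
      have hxl_root : t^[l] j ≠ root := by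
        intro hh
        have hir : i = root := by
          rw [← hk, show Nat.find hex = (Nat.find hex - l) + l by omega,
            Function.iterate_add_apply, hh, Function.iterate_fixed ht.1]
        exact hxl_ne (hh.trans hir.symm)
      have hanc : t^[Nat.find hex - l] (t^[l] j) = i := by
        rw [← Function.iterate_add_apply, show (Nat.find hex - l) + l = Nat.find hex by omega]
        exact hk
      have hdgt : d i < d (t^[l] j) := by
        by_cases hir : i = root
        · have h0 : d i = 0 := (hdzero i).mpr hir
          have h1 : d (t^[l] j) ≠ 0 := fun hh => hxl_root ((hdzero _).mp hh)
          omega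
        · have := hdmono (Nat.find hex - l) (t^[l] j) i hir hanc
          omega
      rw [hpre]
      exact ⟨hbefore _ hxl_ne hdgt, hxl_root⟩
    constructor
    · intro hti hcon
      obtain ⟨m, hm⟩ := rtg_to_iterate hcon (fun a _ => rfl)
      have hcyc : t^[m + 1] i = i := by
        rw [Function.iterate_succ_apply, hm]
      exact no_cycle ht hcyc (by omega) hti
    · intro j hj
      by_contra hcl
      push_neg at hcl
      obtain ⟨k, _, hk⟩ := hC i j hcl
      have hji : j ≠ i := fun h => hj (h ▸ Relation.ReflTransGen.refl)
      exact hj (hreach j hji ⟨k, hk⟩)
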